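/- Let Φ : M_n → M_n be a positive, unital, trace-preserving linear map. Then for every Hermitian X and every p ≥ 1, Tr[|Φ(X)|^p] ≤ Tr[|X|^p]. -/

import Mathlib

open Matrix ComplexOrder

noncomputable def mlog {n : Type*} [Fintype n] [DecidableEq n] (A : Matrix n n ℂ) : Matrix n n ℂ :=
  cfc Real.log A

noncomputable def rtr {n : Type*} [Fintype n] [DecidableEq n] (A : Matrix n n ℂ) : ℝ :=
  A.trace.re

/-- `Tr[|A|^p]` where `|A| = (A^* A)^{1/2}`. -/
noncomputable def traceAbsPow {n : Type*} [Fintype n] [DecidableEq n]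
    (A : Matrix n n ℂ) (p : ℝ) : ℝ :=
  rtr (cfc (fun x : ℝ => x ^ (p / 2)) (Aᴴ * A))


-- aux lemma 1: convexity
lemma aux_convexOn {p : ℝ} (hp : 1 ≤ p) :
    ConvexOn ℝ Set.univ (fun t : ℝ => (t ^ 2) ^ (p / 2)) := by
  have habs : (fun t : ℝ => (t ^ 2) ^ (p / 2)) = fun t : ℝ => |t| ^ p := by
    funext t
    rw [← sq_abs, ← Real.rpow_natCast |t| 2, ← Real.rpow_mul (abs_nonneg t)]
    congr 1; ring
  rw [habs]
  refine ⟨convex_univ, fun x _ y _ a b ha hb hab => ?_⟩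
  simp only [smul_eq_mul]
  calc |a * x + b * y| ^ p ≤ (a * |x| + b * |y|) ^ p := by
        refine Real.rpow_le_rpow (abs_nonneg _) ?_ (by linarith)
        calc |a * x + b * y| ≤ |a * x| + |b * y| := abs_add_le _ _
          _ = a * |x| + b * |y| := by rw [abs_mul, abs_mul, abs_of_nonneg ha, abs_of_nonneg hb]
    _ ≤ a * |x| ^ p + b * |y| ^ p := by
        have := (convexOn_rpow hp).2 (Set.mem_Ici.2 (abs_nonneg x))
          (Set.mem_Ici.2 (abs_nonneg y)) ha hb hab
        simpa using this

-- aux lemma 2: diagonal entries of PSD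
lemma aux_diag {n : Type*} [Fintype n] [DecidableEq n] {M : Matrix n n ℂ}
    (hM : M.PosSemidef) (i : n) : 0 ≤ M i i := by
  exact hM.diag_nonneg

-- aux lemma 3: trace formula for Hermitian matrices
lemma aux_traceAbsPow {n : Type*} [Fintype n] [DecidableEq n] {A : Matrix n n ℂ}
    (hA : A.IsHermitian) {p : ℝ} (hp : 1 ≤ p) :
    (cfc (fun x : ℝ => x ^ (p / 2)) (Aᴴ * A)).trace.re
      = ∑ i, (hA.eigenvalues i ^ 2) ^ (p / 2) := by
  have hsa : IsSelfAdjoint A := hA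
  have hAA : Aᴴ * A = A ^ 2 := by rw [hA.eq, sq]
  have hcont : Continuous fun x : ℝ => x ^ (p / 2) :=
    Real.continuous_rpow_const (by linarith)
  rw [hAA, ← cfc_comp_pow (fun x : ℝ => x ^ (p / 2)) 2 A hcont.continuousOn hsa]
  rw [hA.cfc_eq, Matrix.IsHermitian.cfc, Unitary.conjStarAlgAut_apply, Matrix.trace_mul_cycle,
    Matrix.mem_unitaryGroup_iff'.mp (Matrix.IsHermitian.eigenvectorUnitary hA).2, one_mul,
    Matrix.trace_diagonal]
  simp [Function.comp]

theorem aux_stmt17 {n : Type*} [Fintype n] [DecidableEq n]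
    (Φ : Matrix n n ℂ →ₗ[ℂ] Matrix n n ℂ)
    (hpos : ∀ A : Matrix n n ℂ, A.PosSemidef → (Φ A).PosSemidef)
    (hunital : Φ 1 = 1)
    (htr : ∀ A : Matrix n n ℂ, (Φ A).trace = A.trace)
    (X : Matrix n n ℂ) (hX : X.IsHermitian) (p : ℝ) (hp : 1 ≤ p) :
    (cfc (fun x : ℝ => x ^ (p / 2)) ((Φ X)ᴴ * (Φ X))).trace.re
      ≤ (cfc (fun x : ℝ => x ^ (p / 2)) (Xᴴ * X)).trace.re := by
  set U : Matrix n n ℂ := (Matrix.IsHermitian.eigenvectorUnitary hX : Matrix n n ℂ) with hU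
  set lam := hX.eigenvalues with hlam
  have hUU : star U * U = 1 :=
    Matrix.mem_unitaryGroup_iff'.mp (Matrix.IsHermitian.eigenvectorUnitary hX).2
  have hUU' : U * star U = 1 :=
    Matrix.mem_unitaryGroup_iff.mp (Matrix.IsHermitian.eigenvectorUnitary hX).2
  -- the spectral projections
  set P : n → Matrix n n ℂ :=
    fun j => U * Matrix.diagonal (fun k : n => if k = j then (1 : ℂ) else 0) * star U with hP
  -- general conjugation PSD lemma
  have hconj : ∀ d : n → ℂ, (∀ i, 0 ≤ d i) →
      ∀ W : Matrix n n ℂ, (W * Matrix.diagonal d * star W).PosSemidef := by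
    intro d hd W
    have h1 : (Matrix.diagonal d).PosSemidef := Matrix.PosSemidef.diagonal hd
    simpa [Matrix.star_eq_conjTranspose] using h1.mul_mul_conjTranspose_same W
  have hPpsd : ∀ j, (P j).PosSemidef := by
    intro j
    exact hconj _ (fun i => by split <;> simp) U
  -- sum of projections is 1
  have hDsum : ∀ c : n → ℂ,
      ∑ j, c j • Matrix.diagonal (fun k : n => if k = j then (1 : ℂ) else 0)
        = Matrix.diagonal c := by
    intro c
    ext i k
    simp only [Matrix.sum_apply, Matrix.smul_apply, Matrix.diagonal_apply, smul_eq_mul,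
      mul_ite, mul_one, mul_zero]
    by_cases hik : i = k
    · subst hik; simp
    · simp [hik]
  have hPsum : ∑ j, P j = 1 := by
    have : ∑ j, P j = U * (∑ j, Matrix.diagonal (fun k : n => if k = j then (1 : ℂ) else 0)) * star U := by
      rw [Finset.mul_sum, Finset.sum_mul]
    rw [this]
    have h2 : ∑ j, Matrix.diagonal (fun k : n => if k = j then (1 : ℂ) else 0)
        = Matrix.diagonal (fun _ : n => (1 : ℂ)) := by
      have h3 := hDsum (fun _ => (1 : ℂ))
      simp only [one_smul] at h3
      exact h3
    rw [h2, Matrix.diagonal_one, mul_one, hUU']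
  -- X as a combination of projections
  have hXsum : X = ∑ j, (lam j : ℂ) • P j := by
    have h1 : ∀ j, (lam j : ℂ) • P j
        = U * ((lam j : ℂ) • Matrix.diagonal (fun k : n => if k = j then (1 : ℂ) else 0)) * star U := by
      intro j
      rw [Matrix.mul_smul, Matrix.smul_mul]
    calc X = U * Matrix.diagonal (RCLike.ofReal ∘ lam) * star U := hX.spectral_theorem
      _ = ∑ j, (lam j : ℂ) • P j := by
          rw [Finset.sum_congr rfl (fun j _ => h1 j), ← Finset.sum_mul, ← Finset.mul_sum,
            hDsum (fun j => (lam j : ℂ))]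
          rfl
  -- Φ X is Hermitian
  have hPhiX : Φ X = ∑ j, (lam j : ℂ) • Φ (P j) := by
    rw [hXsum, map_sum]
    exact Finset.sum_congr rfl fun j _ => Φ.map_smul _ _
  have hY : (Φ X).IsHermitian := by
    show (Φ X)ᴴ = Φ X
    rw [hPhiX, Matrix.conjTranspose_sum]
    refine Finset.sum_congr rfl fun j _ => ?_
    rw [Matrix.conjTranspose_smul, (hpos _ (hPpsd j)).1.eq]
    simp [Complex.star_def, Complex.conj_ofReal]
  set V : Matrix n n ℂ := (Matrix.IsHermitian.eigenvectorUnitary hY : Matrix n n ℂ) with hV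
  set mu := hY.eigenvalues with hmu
  have hVV : star V * V = 1 :=
    Matrix.mem_unitaryGroup_iff'.mp (Matrix.IsHermitian.eigenvectorUnitary hY).2
  have hVV' : V * star V = 1 :=
    Matrix.mem_unitaryGroup_iff.mp (Matrix.IsHermitian.eigenvectorUnitary hY).2
  have hdiagY : star V * Φ X * V = Matrix.diagonal (RCLike.ofReal ∘ mu) := by
    conv_lhs => rw [hY.spectral_theorem, Unitary.conjStarAlgAut_apply]
    have : star V * (V * Matrix.diagonal (RCLike.ofReal ∘ mu) * star V) * V
        = (star V * V) * Matrix.diagonal (RCLike.ofReal ∘ mu) * (star V * V) := by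
      simp only [mul_assoc]
    rw [this, hVV, one_mul, mul_one]
  -- the weights
  set w : n → n → ℝ := fun i j => ((star V * Φ (P j) * V) i i).re with hw
  have hMpsd : ∀ j, (star V * Φ (P j) * V).PosSemidef := by
    intro j
    have := (hpos _ (hPpsd j)).conjTranspose_mul_mul_same V
    simpa [Matrix.star_eq_conjTranspose] using this
  have hw0 : ∀ i j, 0 ≤ w i j := fun i j => (Complex.le_def.mp (aux_diag (hMpsd j) i)).1
  -- key identity: mu i = ∑ j, w i j * lam j
  have hkey : ∀ i, mu i = ∑ j, w i j * lam j := by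
    intro i
    have h1 : star V * Φ X * V = ∑ j, (lam j : ℂ) • (star V * Φ (P j) * V) := by
      rw [hPhiX, Finset.mul_sum, Finset.sum_mul]
      refine Finset.sum_congr rfl fun j _ => ?_
      rw [Matrix.mul_smul, Matrix.smul_mul]
    have h2 := congrArg (fun M : Matrix n n ℂ => (M i i).re) (hdiagY.symm.trans h1)
    simp only [Matrix.diagonal_apply_eq, Function.comp_apply, Matrix.sum_apply,
      Matrix.smul_apply, smul_eq_mul, Complex.re_sum] at h2
    rw [show ((RCLike.ofReal : ℝ → ℂ) (mu i)).re = mu i from Complex.ofReal_re _] at h2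
    rw [h2]
    exact Finset.sum_congr rfl fun j _ => by
      rw [mul_comm (w i j)]
      simp [Complex.mul_re]
      exact Or.inl rfl
  -- row sums are 1
  have hrow : ∀ i, ∑ j, w i j = 1 := by
    intro i
    have h1 : ∑ j, (star V * Φ (P j) * V) = (1 : Matrix n n ℂ) := by
      have : ∑ j, (star V * Φ (P j) * V) = star V * Φ (∑ j, P j) * V := by
        rw [map_sum, Finset.mul_sum, Finset.sum_mul]
      rw [this, hPsum, hunital, mul_one, hVV]
    have h2 := congrArg (fun M : Matrix n n ℂ => (M i i).re) h1
    simpa [Matrix.sum_apply, Complex.re_sum, Matrix.one_apply] using h2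
  -- column sums are 1
  have hcol : ∀ j, ∑ i, w i j = 1 := by
    intro j
    have h1 : ∑ i, (star V * Φ (P j) * V) i i = (1 : ℂ) := by
      have h2 : (star V * Φ (P j) * V).trace = (1 : ℂ) := by
        rw [Matrix.trace_mul_cycle, hVV', one_mul, htr]
        have h3 : (P j).trace = (Matrix.diagonal (fun k : n => if k = j then (1 : ℂ) else 0)).trace := by
          rw [hP]
          rw [Matrix.trace_mul_cycle, hUU, one_mul]
        rw [h3, Matrix.trace_diagonal]
        simp
      simpa [Matrix.trace] using h2
    have h2 := congrArg Complex.re h1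
    simpa [Complex.re_sum] using h2
  -- put everything together
  rw [aux_traceAbsPow hX hp, aux_traceAbsPow hY hp]
  calc ∑ i, (mu i ^ 2) ^ (p / 2)
      = ∑ i, ((∑ j, w i j • lam j) ^ 2) ^ (p / 2) := by
        refine Finset.sum_congr rfl fun i _ => ?_
        simp only [smul_eq_mul]
        rw [← hkey i]
    _ ≤ ∑ i, ∑ j, w i j • ((lam j ^ 2) ^ (p / 2)) := by
        refine Finset.sum_le_sum fun i _ => ?_
        exact (aux_convexOn hp).map_sum_le (fun j _ => hw0 i j) (hrow i)
          (fun j _ => Set.mem_univ _)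
    _ = ∑ j, (∑ i, w i j) * ((lam j ^ 2) ^ (p / 2)) := by
        rw [Finset.sum_comm]
        exact Finset.sum_congr rfl fun j _ => by rw [Finset.sum_mul]; rfl
    _ = ∑ j, (lam j ^ 2) ^ (p / 2) := by
        refine Finset.sum_congr rfl fun j _ => ?_
        rw [hcol j, one_mul]


theorem stmt17 {n : Type*} [Fintype n] [DecidableEq n]
    (Φ : Matrix n n ℂ →ₗ[ℂ] Matrix n n ℂ)
    (hpos : ∀ A : Matrix n n ℂ, A.PosSemidef → (Φ A).PosSemidef)
    (hunital : Φ 1 = 1)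
    (htr : ∀ A : Matrix n n ℂ, (Φ A).trace = A.trace)
    (X : Matrix n n ℂ) (hX : X.IsHermitian) (p : ℝ) (hp : 1 ≤ p) :
    traceAbsPow (Φ X) p ≤ traceAbsPow X p := by
  have := aux_stmt17 Φ hpos hunital htr X hX p hp
  simpa [traceAbsPow, rtr] using this
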